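/- For every ρ ∈ (−1,1) with ρ ≠ 0 and every x ∈ ℝ, the Kolmogorov dependence statistic satisfies k(x) := sup_{y ∈ ℝ} |P(Y ≤ y | X > x) − P(Y ≤ y | X ≤ x)| = (1/(Φ(x)(1−Φ(x)))) · |∫_{−∞}^{y*} Φ((x − ρu)/√(1−ρ²)) φ(u) du − Φ(x)Φ(y*)|, where y* = x(1 − √(1−ρ²))/ρ. -/

import Mathlib

set_option maxHeartbeats 1000000
open MeasureTheory Real ProbabilityTheory Filter Set Topology
open scoped ENNReal


open MeasureTheory Real

/-- The standard normal density `φ(u) = (2π)^{-1/2} exp(-u²/2)`. -/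
noncomputable def stdNormalPDF (u : ℝ) : ℝ := (Real.sqrt (2 * π))⁻¹ * Real.exp (-u ^ 2 / 2)

/-- The standard normal CDF `Φ(x) = ∫_{-∞}^x φ(u) du`. -/
noncomputable def stdNormalCDF (x : ℝ) : ℝ := ∫ u in Set.Iic x, stdNormalPDF u

/-- `y* = x(1 − √(1−ρ²))/ρ`. -/
noncomputable def ystar (ρ x : ℝ) : ℝ := x * (1 - Real.sqrt (1 - ρ ^ 2)) / ρ

lemma stdNormalPDF_eq : stdNormalPDF = gaussianPDFReal 0 1 := by
  ext u
  simp [stdNormalPDF, gaussianPDFReal, neg_div]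

lemma stdNormalPDF_pos (u : ℝ) : 0 < stdNormalPDF u := by
  rw [stdNormalPDF_eq]; exact gaussianPDFReal_pos 0 1 u one_ne_zero

lemma stdNormalPDF_nonneg (u : ℝ) : 0 ≤ stdNormalPDF u := (stdNormalPDF_pos u).le

lemma continuous_stdNormalPDF : Continuous stdNormalPDF := by
  unfold stdNormalPDF
  continuity

lemma integrable_stdNormalPDF : Integrable stdNormalPDF := by
  rw [stdNormalPDF_eq]; exact integrable_gaussianPDFReal 0 1

lemma integral_stdNormalPDF : ∫ u, stdNormalPDF u = 1 := by
  rw [stdNormalPDF_eq]; exact integral_gaussianPDFReal_eq_one 0 one_ne_zero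

lemma stdNormalPDF_le (u : ℝ) : stdNormalPDF u ≤ (Real.sqrt (2 * π))⁻¹ := by
  unfold stdNormalPDF
  have h1 : Real.exp (-u ^ 2 / 2) ≤ 1 := by
    rw [Real.exp_le_one_iff]
    nlinarith [sq_nonneg u]
  have h2 : (0:ℝ) < (Real.sqrt (2 * π))⁻¹ := by
    positivity
  nlinarith

lemma gaussianReal_Iic (x : ℝ) :
    gaussianReal 0 1 (Set.Iic x) = ENNReal.ofReal (stdNormalCDF x) := by
  rw [gaussianReal_apply_eq_integral 0 one_ne_zero, stdNormalCDF, stdNormalPDF_eq]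

lemma stdNormalCDF_nonneg (x : ℝ) : 0 ≤ stdNormalCDF x :=
  integral_nonneg fun u => stdNormalPDF_nonneg u

lemma stdNormalCDF_pos (x : ℝ) : 0 < stdNormalCDF x := by
  rw [stdNormalCDF]
  refine (setIntegral_pos_iff_support_of_nonneg_ae ?_ ?_).2 ?_
  · exact ae_of_all _ fun u => stdNormalPDF_nonneg u
  · exact integrable_stdNormalPDF.integrableOn
  · have : Function.support stdNormalPDF = Set.univ := by
      ext u; simp [Function.mem_support, (stdNormalPDF_pos u).ne']
    rw [this, Set.univ_inter]
    simp [Real.volume_Iic]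

lemma integral_Ioi_stdNormal (x : ℝ) :
    ∫ u in Set.Ioi x, stdNormalPDF u = 1 - stdNormalCDF x := by
  have h := intervalIntegral.integral_Iic_add_Ioi (b := x) (f := stdNormalPDF)
    integrable_stdNormalPDF.integrableOn integrable_stdNormalPDF.integrableOn
  rw [integral_stdNormalPDF] at h
  rw [stdNormalCDF]; linarith

lemma stdNormalCDF_lt_one (x : ℝ) : stdNormalCDF x < 1 := by
  have h : 0 < ∫ u in Set.Ioi x, stdNormalPDF u := by
    refine (setIntegral_pos_iff_support_of_nonneg_ae ?_ ?_).2 ?_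
    · exact ae_of_all _ fun u => stdNormalPDF_nonneg u
    · exact integrable_stdNormalPDF.integrableOn
    · have : Function.support stdNormalPDF = Set.univ := by
        ext u; simp [Function.mem_support, (stdNormalPDF_pos u).ne']
      rw [this, Set.univ_inter]
      simp [Real.volume_Ioi]
  rw [integral_Ioi_stdNormal] at h
  linarith

lemma stdNormalCDF_le_one (x : ℝ) : stdNormalCDF x ≤ 1 := (stdNormalCDF_lt_one x).le

-- scaled pdf equals gaussianPDFReal
lemma scaled_pdf_eq {s : ℝ} (hs : 0 < s) (a u : ℝ) :
    s⁻¹ * stdNormalPDF ((u - a) / s) = gaussianPDFReal a (NNReal.mk (s^2) (sq_nonneg s)) u := by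
  rw [stdNormalPDF]
  unfold gaussianPDFReal
  have h2π : (0:ℝ) < 2 * π := by positivity
  have hsq : Real.sqrt (2 * π * (s^2)) = Real.sqrt (2*π) * s := by
    rw [Real.sqrt_mul h2π.le, Real.sqrt_sq hs.le]
  push_cast
  rw [hsq]
  have : ((u - a) / s) ^ 2 / 2 = (u - a)^2 / (2 * s^2) := by
    rw [div_pow]; ring
  rw [neg_div, neg_div, this]
  rw [mul_inv]
  ring

lemma gaussianReal_scaled (a : ℝ) {s : ℝ} (hs : 0 < s) :
    gaussianReal a (NNReal.mk (s^2) (sq_nonneg s)) =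
      (gaussianReal 0 1).map (fun z => s * z + a) := by
  have h1 : (gaussianReal 0 1).map (fun z => s * z) = gaussianReal 0 (NNReal.mk (s^2) (sq_nonneg s)) := by
    rw [gaussianReal_map_const_mul s]
    congr 1
    · ring
    · ext; push_cast; ring
  have h2 : (fun z => s * z + a) = (fun z => z + a) ∘ (fun z => s * z) := rfl
  rw [h2, ← Measure.map_map (by fun_prop) (by fun_prop), h1,
    gaussianReal_map_add_const a]
  congr 1
  ring

lemma integral_scaled_Iic (a : ℝ) {s : ℝ} (hs : 0 < s) (t : ℝ) :
    ∫ u in Set.Iic t, s⁻¹ * stdNormalPDF ((u - a) / s) = stdNormalCDF ((t - a) / s) := by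
  have key : gaussianReal a (NNReal.mk (s^2) (sq_nonneg s)) (Set.Iic t)
      = ENNReal.ofReal (stdNormalCDF ((t - a) / s)) := by
    rw [gaussianReal_scaled a hs, Measure.map_apply (by fun_prop) measurableSet_Iic]
    have : (fun z => s * z + a) ⁻¹' Set.Iic t = Set.Iic ((t - a) / s) := by
      ext z
      simp only [Set.mem_preimage, Set.mem_Iic]
      rw [le_div_iff₀ hs]
      constructor <;> intro h <;> nlinarith
    rw [this, gaussianReal_Iic]
  have hvne : ((NNReal.mk (s^2) (sq_nonneg s)) : NNReal) ≠ 0 :=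
    fun h => (by positivity : (0:ℝ) < s^2).ne' (congrArg NNReal.toReal h)
  rw [gaussianReal_apply_eq_integral a hvne] at key
  have h1 : ∫ u in Set.Iic t, s⁻¹ * stdNormalPDF ((u - a) / s)
      = ∫ u in Set.Iic t, gaussianPDFReal a (NNReal.mk (s^2) (sq_nonneg s)) u := by
    exact setIntegral_congr_fun measurableSet_Iic fun u _ => scaled_pdf_eq hs a u
  rw [h1]
  exact (ENNReal.ofReal_eq_ofReal_iff
    (integral_nonneg fun u => gaussianPDFReal_nonneg _ _ _) (stdNormalCDF_nonneg _)).mp key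


lemma hasDerivAt_stdNormalCDF (y : ℝ) : HasDerivAt stdNormalCDF (stdNormalPDF y) y := by
  have heq : stdNormalCDF = fun y => (∫ u in (0:ℝ)..y, stdNormalPDF u) + stdNormalCDF 0 := by
    ext y
    rw [← intervalIntegral.integral_Iic_sub_Iic integrable_stdNormalPDF.integrableOn
      integrable_stdNormalPDF.integrableOn]
    unfold stdNormalCDF
    ring
  rw [heq]
  exact (intervalIntegral.integral_hasDerivAt_right
    (integrable_stdNormalPDF.intervalIntegrable)
    continuous_stdNormalPDF.aestronglyMeasurable.stronglyMeasurableAtFilter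
    continuous_stdNormalPDF.continuousAt).add_const _

lemma continuous_stdNormalCDF : Continuous stdNormalCDF := by
  have : Differentiable ℝ stdNormalCDF := fun y => (hasDerivAt_stdNormalCDF y).differentiableAt
  exact this.continuous

lemma monotone_stdNormalCDF : Monotone stdNormalCDF := by
  intro a b hab
  unfold stdNormalCDF
  apply setIntegral_mono_set integrable_stdNormalPDF.integrableOn
    (ae_of_all _ fun u => stdNormalPDF_nonneg u)
  exact HasSubset.Subset.eventuallyLE (Iic_subset_Iic.2 hab)

lemma tendsto_stdNormalCDF_atTop : Tendsto stdNormalCDF atTop (𝓝 1) := by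
  have h := tendsto_measure_Iic_atTop (gaussianReal 0 1)
  simp only [measure_univ] at h
  have h2 : Tendsto (fun x => (gaussianReal 0 1 (Set.Iic x)).toReal) atTop (𝓝 (1:ℝ≥0∞).toReal) :=
    (ENNReal.tendsto_toReal ENNReal.one_ne_top).comp h
  simpa only [gaussianReal_Iic, ENNReal.toReal_ofReal (stdNormalCDF_nonneg _),
    ENNReal.toReal_one] using h2

lemma tendsto_stdNormalCDF_atBot : Tendsto stdNormalCDF atBot (𝓝 0) := by
  have h := tendsto_measure_Ici_atBot (gaussianReal 0 1)
  simp only [measure_univ] at h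
  have h2 : Tendsto (fun x => (gaussianReal 0 1 (Set.Ici x)).toReal) atBot (𝓝 (1:ℝ≥0∞).toReal) :=
    (ENNReal.tendsto_toReal ENNReal.one_ne_top).comp h
  have hae : ∀ x : ℝ, gaussianReal 0 1 (Set.Ici x) = ENNReal.ofReal (1 - stdNormalCDF x) := by
    intro x
    rw [← integral_Ioi_stdNormal, ← measure_congr (Ioi_ae_eq_Ici'
      ((gaussianReal_absolutelyContinuous 0 one_ne_zero) (measure_singleton x)))]
    rw [gaussianReal_apply_eq_integral 0 one_ne_zero, stdNormalPDF_eq]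
  simp only [hae, ENNReal.toReal_one] at h2
  have h3 : Tendsto (fun x => 1 - stdNormalCDF x) atBot (𝓝 1) := by
    refine h2.congr fun x => ?_
    rw [ENNReal.toReal_ofReal (by linarith [stdNormalCDF_le_one x])]
  have := h3.const_sub 1
  simpa using this

-- pointwise convolution identity
lemma conv_identity {ρ : ℝ} (hρ : ρ^2 < 1) (y u : ℝ) :
    (Real.sqrt (1 - ρ^2))⁻¹ * stdNormalPDF ((y - ρ*u)/Real.sqrt (1 - ρ^2)) * stdNormalPDF u
    = stdNormalPDF y * ((Real.sqrt (1 - ρ^2))⁻¹ *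
        stdNormalPDF ((u - ρ*y)/Real.sqrt (1 - ρ^2))) := by
  set s := Real.sqrt (1 - ρ^2) with hs_def
  have hs : 0 < s := Real.sqrt_pos.2 (by linarith)
  have hs2 : s^2 = 1 - ρ^2 := Real.sq_sqrt (by linarith)
  unfold stdNormalPDF
  have hexp : -((y - ρ*u)/s) ^ 2 / 2 + -u ^ 2 / 2 = -y ^ 2 / 2 + -((u - ρ*y)/s) ^ 2 / 2 := by
    have h1 : (1 - ρ^2) ≠ 0 := by nlinarith
    rw [div_pow, div_pow, hs2]
    field_simp
    ring
  suffices h : s⁻¹ * (Real.sqrt (2*π))⁻¹ * (Real.sqrt (2*π))⁻¹ * rexp (-((y - ρ*u)/s)^2/2 + -u^2/2)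
      = s⁻¹ * (Real.sqrt (2*π))⁻¹ * (Real.sqrt (2*π))⁻¹ * rexp (-y^2/2 + -((u - ρ*y)/s)^2/2) by
    rw [Real.exp_add, Real.exp_add] at h
    linear_combination h
  rw [hexp]

noncomputable def Fb (ρ x y : ℝ) : ℝ :=
  ∫ u in Set.Iic x, stdNormalCDF ((y - ρ*u)/Real.sqrt (1 - ρ^2)) * stdNormalPDF u

noncomputable def Gb (ρ y : ℝ) : ℝ :=
  ∫ u, stdNormalCDF ((y - ρ*u)/Real.sqrt (1 - ρ^2)) * stdNormalPDF u

noncomputable def Fsym (ρ x y : ℝ) : ℝ :=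
  ∫ u in Set.Iic y, stdNormalCDF ((x - ρ*u)/Real.sqrt (1 - ρ^2)) * stdNormalPDF u

section core
variable {ρ : ℝ}

lemma s_pos (hρ2 : ρ^2 < 1) : 0 < Real.sqrt (1 - ρ^2) := Real.sqrt_pos.2 (by nlinarith)

lemma integrable_cdf_mul_pdf (c d : ℝ) (ν : Measure ℝ) (hν : ν ≤ volume) :
    Integrable (fun u => stdNormalCDF (c - d*u) * stdNormalPDF u) ν := by
  refine Integrable.mono ((integrable_stdNormalPDF.mono_measure hν)) ?_ ?_
  · exact (Continuous.mul (continuous_stdNormalCDF.comp (by continuity))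
      continuous_stdNormalPDF).aestronglyMeasurable
  · refine ae_of_all _ fun u => ?_
    rw [Real.norm_eq_abs, Real.norm_eq_abs, abs_of_nonneg (stdNormalPDF_nonneg u),
      abs_of_nonneg (mul_nonneg (stdNormalCDF_nonneg _) (stdNormalPDF_nonneg u))]
    nlinarith [stdNormalCDF_nonneg (c - d*u), stdNormalCDF_le_one (c - d*u),
      stdNormalPDF_nonneg u]

/-- derivative under the integral over a sub-measure of volume -/
lemma hasDerivAt_param {ρ s : ℝ} (hs : 0 < s) (ν : Measure ℝ)
    (hν : ν ≤ volume) (y : ℝ) :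
    HasDerivAt (fun t => ∫ u, stdNormalCDF ((t - ρ*u)/s) * stdNormalPDF u ∂ν)
      (∫ u, s⁻¹ * stdNormalPDF ((y - ρ*u)/s) * stdNormalPDF u ∂ν) y := by
  have hmeas : ∀ t : ℝ, AEStronglyMeasurable
      (fun u => stdNormalCDF ((t - ρ*u)/s) * stdNormalPDF u) ν :=
    fun t => (Continuous.mul (continuous_stdNormalCDF.comp (by continuity))
      continuous_stdNormalPDF).aestronglyMeasurable
  have heqf : (fun u => stdNormalCDF (y/s - (ρ/s)*u) * stdNormalPDF u)
      = (fun u => stdNormalCDF ((y - ρ*u)/s) * stdNormalPDF u) := by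
    funext u
    rw [sub_div, div_mul_eq_mul_div]
  have hint : Integrable (fun u => stdNormalCDF ((y - ρ*u)/s) * stdNormalPDF u) ν := by
    rw [← heqf]
    exact integrable_cdf_mul_pdf (y/s) (ρ/s) ν hν
  have hmeas' : AEStronglyMeasurable
      (fun u => s⁻¹ * stdNormalPDF ((y - ρ*u)/s) * stdNormalPDF u) ν :=
    ((continuous_const.mul (continuous_stdNormalPDF.comp (by continuity))).mul
      continuous_stdNormalPDF).aestronglyMeasurable
  have hbd : ∀ᵐ u ∂ν, ∀ t ∈ Metric.ball y 1,
      ‖s⁻¹ * stdNormalPDF ((t - ρ*u)/s) * stdNormalPDF u‖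
        ≤ s⁻¹ * (Real.sqrt (2 * π))⁻¹ * stdNormalPDF u := by
    refine ae_of_all _ fun u t _ => ?_
    rw [Real.norm_eq_abs, abs_of_nonneg (mul_nonneg (mul_nonneg (by positivity)
      (stdNormalPDF_nonneg _)) (stdNormalPDF_nonneg _))]
    have h1 := stdNormalPDF_le ((t - ρ*u)/s)
    have h2 := stdNormalPDF_nonneg u
    have h3 : (0:ℝ) < s⁻¹ := by positivity
    rw [mul_assoc, mul_assoc]
    exact mul_le_mul_of_nonneg_left (mul_le_mul_of_nonneg_right h1 h2) h3.le
  have hbint : Integrable (fun u => s⁻¹ * (Real.sqrt (2 * π))⁻¹ * stdNormalPDF u) ν :=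
    (integrable_stdNormalPDF.mono_measure hν).const_mul (s⁻¹ * (Real.sqrt (2*π))⁻¹)
  have hdiff : ∀ᵐ u ∂ν, ∀ t ∈ Metric.ball y 1,
      HasDerivAt (fun t => stdNormalCDF ((t - ρ*u)/s) * stdNormalPDF u)
        (s⁻¹ * stdNormalPDF ((t - ρ*u)/s) * stdNormalPDF u) t := by
    refine ae_of_all _ fun u t _ => ?_
    have h1 : HasDerivAt (fun t : ℝ => (t - ρ*u)/s) s⁻¹ t := by
      simpa using ((hasDerivAt_id t).sub_const (ρ*u)).div_const s
    have h2 := (hasDerivAt_stdNormalCDF ((t - ρ*u)/s)).comp t h1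
    have h3 := h2.mul_const (stdNormalPDF u)
    exact h3.congr_deriv (by ring)
  have h := hasDerivAt_integral_of_dominated_loc_of_deriv_le (μ := ν)
    (F := fun t u => stdNormalCDF ((t - ρ*u)/s) * stdNormalPDF u)
    (F' := fun t u => s⁻¹ * stdNormalPDF ((t - ρ*u)/s) * stdNormalPDF u)
    (x₀ := y) (bound := fun u => s⁻¹ * (Real.sqrt (2 * π))⁻¹ * stdNormalPDF u)
    (Metric.ball_mem_nhds y one_pos) (Eventually.of_forall hmeas) hint hmeas' hbd hbint hdiff
  exact h.2


lemma integral_scaled_univ (a : ℝ) {s : ℝ} (hs : 0 < s) :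
    ∫ u, s⁻¹ * stdNormalPDF ((u - a) / s) = 1 := by
  have hvne : ((NNReal.mk (s^2) (sq_nonneg s)) : NNReal) ≠ 0 :=
    fun h => (by positivity : (0:ℝ) < s^2).ne' (congrArg NNReal.toReal h)
  rw [show (fun u => s⁻¹ * stdNormalPDF ((u - a) / s))
      = gaussianPDFReal a (NNReal.mk (s^2) (sq_nonneg s)) from funext fun u => scaled_pdf_eq hs a u]
  exact integral_gaussianPDFReal_eq_one a hvne

lemma deriv_integral_Iic (hρ2 : ρ^2 < 1) (x y : ℝ) :
    ∫ u in Set.Iic x, (Real.sqrt (1 - ρ^2))⁻¹ *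
        stdNormalPDF ((y - ρ*u)/Real.sqrt (1 - ρ^2)) * stdNormalPDF u
      = stdNormalPDF y * stdNormalCDF ((x - ρ*y)/Real.sqrt (1 - ρ^2)) := by
  have hs : 0 < Real.sqrt (1 - ρ^2) := s_pos hρ2
  rw [setIntegral_congr_fun measurableSet_Iic (fun u _ => conv_identity hρ2 y u),
    integral_const_mul]
  congr 1
  exact integral_scaled_Iic (ρ*y) hs x

lemma deriv_integral_univ (hρ2 : ρ^2 < 1) (y : ℝ) :
    ∫ u, (Real.sqrt (1 - ρ^2))⁻¹ *
        stdNormalPDF ((y - ρ*u)/Real.sqrt (1 - ρ^2)) * stdNormalPDF u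
      = stdNormalPDF y := by
  have hs : 0 < Real.sqrt (1 - ρ^2) := s_pos hρ2
  rw [integral_congr_ae (ae_of_all _ (fun u => conv_identity hρ2 y u)),
    integral_const_mul, integral_scaled_univ (ρ*y) hs, mul_one]

lemma hasDerivAt_Fb (hρ2 : ρ^2 < 1) (x y : ℝ) :
    HasDerivAt (Fb ρ x)
      (stdNormalPDF y * stdNormalCDF ((x - ρ*y)/Real.sqrt (1 - ρ^2))) y := by
  have h := hasDerivAt_param (ρ := ρ) (s_pos hρ2) (volume.restrict (Set.Iic x))
    Measure.restrict_le_self y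
  rw [deriv_integral_Iic hρ2 x y] at h
  exact h

lemma hasDerivAt_Gb (hρ2 : ρ^2 < 1) (y : ℝ) :
    HasDerivAt (Gb ρ) (stdNormalPDF y) y := by
  have h := hasDerivAt_param (ρ := ρ) (s_pos hρ2) volume le_rfl y
  rw [deriv_integral_univ hρ2 y] at h
  exact h

lemma hasDerivAt_integral_Iic {g : ℝ → ℝ} (hgc : Continuous g) (hgi : Integrable g) (y : ℝ) :
    HasDerivAt (fun t => ∫ u in Set.Iic t, g u) (g y) y := by
  have heq : (fun t => ∫ u in Set.Iic t, g u)
      = fun t => (∫ u in (0:ℝ)..t, g u) + ∫ u in Set.Iic 0, g u := by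
    ext t
    rw [← intervalIntegral.integral_Iic_sub_Iic hgi.integrableOn hgi.integrableOn]
    ring
  rw [heq]
  exact (intervalIntegral.integral_hasDerivAt_right hgi.intervalIntegrable
    hgc.aestronglyMeasurable.stronglyMeasurableAtFilter hgc.continuousAt).add_const _

lemma hasDerivAt_Fsym (hρ2 : ρ^2 < 1) (x y : ℝ) :
    HasDerivAt (Fsym ρ x)
      (stdNormalPDF y * stdNormalCDF ((x - ρ*y)/Real.sqrt (1 - ρ^2))) y := by
  have h := hasDerivAt_integral_Iic (g := fun u =>
      stdNormalCDF ((x - ρ*u)/Real.sqrt (1 - ρ^2)) * stdNormalPDF u)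
    (Continuous.mul (continuous_stdNormalCDF.comp (by continuity)) continuous_stdNormalPDF)
    ?_ y
  · rw [show stdNormalCDF ((x - ρ*y)/Real.sqrt (1 - ρ^2)) * stdNormalPDF y
      = stdNormalPDF y * stdNormalCDF ((x - ρ*y)/Real.sqrt (1 - ρ^2)) from mul_comm _ _] at h
    exact h
  · have heqf : (fun u => stdNormalCDF (x/Real.sqrt (1 - ρ^2)
        - (ρ/Real.sqrt (1 - ρ^2))*u) * stdNormalPDF u)
        = (fun u => stdNormalCDF ((x - ρ*u)/Real.sqrt (1 - ρ^2)) * stdNormalPDF u) := by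
      funext u
      rw [sub_div, div_mul_eq_mul_div]
    rw [← heqf]
    exact integrable_cdf_mul_pdf _ _ volume le_rfl

lemma tendsto_arg_atBot {s : ℝ} (hs : 0 < s) (c : ℝ) :
    Tendsto (fun y : ℝ => (y - c)/s) atBot atBot :=
  (tendsto_atBot_add_const_right _ (-c) tendsto_id).atBot_div_const hs

lemma tendsto_arg_atTop {s : ℝ} (hs : 0 < s) (c : ℝ) :
    Tendsto (fun y : ℝ => (y - c)/s) atTop atTop :=
  (tendsto_atTop_add_const_right _ (-c) tendsto_id).atTop_div_const hs

lemma tendsto_int_param {ρ : ℝ} (hρ2 : ρ^2 < 1) (ν : Measure ℝ) (hν : ν ≤ volume)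
    {l : Filter ℝ} [l.IsCountablyGenerated] {f : ℝ → ℝ}
    (hlim : ∀ u, Tendsto (fun y => stdNormalCDF ((y - ρ*u)/Real.sqrt (1 - ρ^2))
        * stdNormalPDF u) l (𝓝 (f u))) :
    Tendsto (fun y => ∫ u, stdNormalCDF ((y - ρ*u)/Real.sqrt (1 - ρ^2))
        * stdNormalPDF u ∂ν) l (𝓝 (∫ u, f u ∂ν)) := by
  refine tendsto_integral_filter_of_dominated_convergence (bound := stdNormalPDF) ?_ ?_ ?_ ?_
  · refine Eventually.of_forall fun y => ?_
    exact (Continuous.mul (continuous_stdNormalCDF.comp (by continuity))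
      continuous_stdNormalPDF).aestronglyMeasurable
  · refine Eventually.of_forall fun y => ae_of_all _ fun u => ?_
    rw [Real.norm_eq_abs, abs_of_nonneg (mul_nonneg (stdNormalCDF_nonneg _)
      (stdNormalPDF_nonneg _))]
    nlinarith [stdNormalCDF_le_one ((y - ρ*u)/Real.sqrt (1 - ρ^2)),
      stdNormalPDF_nonneg u, stdNormalCDF_nonneg ((y - ρ*u)/Real.sqrt (1 - ρ^2))]
  · exact integrable_stdNormalPDF.mono_measure hν
  · exact ae_of_all _ hlim

lemma tendsto_cdf_arg_atBot {ρ : ℝ} (hρ2 : ρ^2 < 1) (u : ℝ) :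
    Tendsto (fun y => stdNormalCDF ((y - ρ*u)/Real.sqrt (1 - ρ^2)) * stdNormalPDF u)
      atBot (𝓝 0) := by
  have h := (tendsto_stdNormalCDF_atBot.comp (tendsto_arg_atBot (s_pos hρ2) (ρ*u))).mul_const
    (stdNormalPDF u)
  simpa using h

lemma tendsto_cdf_arg_atTop {ρ : ℝ} (hρ2 : ρ^2 < 1) (u : ℝ) :
    Tendsto (fun y => stdNormalCDF ((y - ρ*u)/Real.sqrt (1 - ρ^2)) * stdNormalPDF u)
      atTop (𝓝 (stdNormalPDF u)) := by
  have h := (tendsto_stdNormalCDF_atTop.comp (tendsto_arg_atTop (s_pos hρ2) (ρ*u))).mul_const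
    (stdNormalPDF u)
  simpa using h

lemma tendsto_Fb_atBot {ρ : ℝ} (hρ2 : ρ^2 < 1) (x : ℝ) :
    Tendsto (Fb ρ x) atBot (𝓝 0) := by
  have h := tendsto_int_param hρ2 (volume.restrict (Set.Iic x)) Measure.restrict_le_self
    (f := fun _ => 0) (fun u => tendsto_cdf_arg_atBot hρ2 u)
  simp at h; exact h

lemma tendsto_Fb_atTop {ρ : ℝ} (hρ2 : ρ^2 < 1) (x : ℝ) :
    Tendsto (Fb ρ x) atTop (𝓝 (stdNormalCDF x)) := by
  have h := tendsto_int_param hρ2 (volume.restrict (Set.Iic x)) Measure.restrict_le_self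
    (f := stdNormalPDF) (fun u => tendsto_cdf_arg_atTop hρ2 u)
  exact h

lemma tendsto_Gb_atBot {ρ : ℝ} (hρ2 : ρ^2 < 1) :
    Tendsto (Gb ρ) atBot (𝓝 0) := by
  have h := tendsto_int_param hρ2 volume le_rfl
    (f := fun _ => 0) (fun u => tendsto_cdf_arg_atBot hρ2 u)
  simp at h; exact h

lemma tendsto_Gb_atTop {ρ : ℝ} (hρ2 : ρ^2 < 1) :
    Tendsto (Gb ρ) atTop (𝓝 1) := by
  have h := tendsto_int_param hρ2 volume le_rfl
    (f := stdNormalPDF) (fun u => tendsto_cdf_arg_atTop hρ2 u)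
  rwa [integral_stdNormalPDF] at h

lemma Fsym_nonneg {ρ : ℝ} (x y : ℝ) : 0 ≤ Fsym ρ x y :=
  integral_nonneg fun u => mul_nonneg (stdNormalCDF_nonneg _) (stdNormalPDF_nonneg _)

lemma Fsym_le_cdf {ρ : ℝ} (x y : ℝ) : Fsym ρ x y ≤ stdNormalCDF y := by
  rw [Fsym, stdNormalCDF.eq_def]
  refine setIntegral_mono_on ?_ integrable_stdNormalPDF.integrableOn measurableSet_Iic
    fun u _ => ?_
  · have heqf : (fun u => stdNormalCDF (x/Real.sqrt (1 - ρ^2)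
        - (ρ/Real.sqrt (1 - ρ^2))*u) * stdNormalPDF u)
        = (fun u => stdNormalCDF ((x - ρ*u)/Real.sqrt (1 - ρ^2)) * stdNormalPDF u) := by
      funext u
      rw [sub_div, div_mul_eq_mul_div]
    rw [← heqf]
    exact (integrable_cdf_mul_pdf _ _ volume le_rfl).integrableOn
  · nlinarith [stdNormalCDF_le_one ((x - ρ*u)/Real.sqrt (1 - ρ^2)),
      stdNormalPDF_nonneg u, stdNormalCDF_nonneg ((x - ρ*u)/Real.sqrt (1 - ρ^2))]

lemma tendsto_Fsym_atBot {ρ : ℝ} (x : ℝ) : Tendsto (Fsym ρ x) atBot (𝓝 0) :=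
  tendsto_of_tendsto_of_tendsto_of_le_of_le tendsto_const_nhds tendsto_stdNormalCDF_atBot
    (fun y => Fsym_nonneg x y) (fun y => Fsym_le_cdf x y)

lemma eq_of_deriv_eq {f g d : ℝ → ℝ} (hf : ∀ y, HasDerivAt f (d y) y)
    (hg : ∀ y, HasDerivAt g (d y) y) (hft : Tendsto f atBot (𝓝 0))
    (hgt : Tendsto g atBot (𝓝 0)) : f = g := by
  have hdiff : Differentiable ℝ (f - g) :=
    fun y => ((hf y).sub (hg y)).differentiableAt
  have hconst : ∀ y : ℝ, (f - g) y = (f - g) 0 := by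
    intro y
    apply is_const_of_deriv_eq_zero hdiff
    intro t
    have := ((hf t).sub (hg t))
    simpa using this.deriv
  have htend : Tendsto (f - g) atBot (𝓝 0) := by
    have := hft.sub hgt; simp only [sub_zero] at this; exact this
  have htend2 : Tendsto (f - g) atBot (𝓝 ((f - g) 0)) := by
    refine Tendsto.congr (fun y => (hconst y).symm) tendsto_const_nhds
  have h0 : (f - g) 0 = 0 := tendsto_nhds_unique htend2 htend
  funext y
  have := hconst y
  rw [h0] at this
  have : f y - g y = 0 := this
  linarith

lemma Gb_eq_cdf {ρ : ℝ} (hρ2 : ρ^2 < 1) : Gb ρ = stdNormalCDF :=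
  eq_of_deriv_eq (fun y => hasDerivAt_Gb hρ2 y) (fun y => hasDerivAt_stdNormalCDF y)
    (tendsto_Gb_atBot hρ2) tendsto_stdNormalCDF_atBot

lemma Fb_eq_Fsym {ρ : ℝ} (hρ2 : ρ^2 < 1) (x : ℝ) : Fb ρ x = Fsym ρ x :=
  eq_of_deriv_eq (fun y => hasDerivAt_Fb hρ2 x y) (fun y => hasDerivAt_Fsym hρ2 x y)
    (tendsto_Fb_atBot hρ2 x) (tendsto_Fsym_atBot x)


lemma ystar_prop {ρ : ℝ} (hρ2 : ρ^2 < 1) (hρ0 : ρ ≠ 0) (x : ℝ) :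
    (x - ρ * ystar ρ x) / Real.sqrt (1 - ρ^2) = x := by
  have hs : 0 < Real.sqrt (1 - ρ^2) := s_pos hρ2
  rw [ystar]
  field_simp
  ring

lemma abs_le_of_valley {H d : ℝ → ℝ} {m : ℝ} (hd : ∀ y, HasDerivAt H (d y) y)
    (hbot : Tendsto H atBot (𝓝 0)) (htop : Tendsto H atTop (𝓝 0))
    (hneg : ∀ y, y ≤ m → d y ≤ 0) (hpos : ∀ y, m ≤ y → 0 ≤ d y) (y : ℝ) :
    |H y| ≤ |H m| := by
  have hcont : Continuous H := by
    have : Differentiable ℝ H := fun y => (hd y).differentiableAt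
    exact this.continuous
  have anti : AntitoneOn H (Set.Iic m) := by
    refine antitoneOn_of_deriv_nonpos (convex_Iic m) hcont.continuousOn
      (fun y hy => (hd y).differentiableAt.differentiableWithinAt) fun y hy => ?_
    rw [(hd y).deriv]
    rw [interior_Iic] at hy
    exact hneg y hy.le
  have mono : MonotoneOn H (Set.Ici m) := by
    refine monotoneOn_of_deriv_nonneg (convex_Ici m) hcont.continuousOn
      (fun y hy => (hd y).differentiableAt.differentiableWithinAt) fun y hy => ?_
    rw [(hd y).deriv]
    rw [interior_Ici] at hy
    exact hpos y hy.le
  have hHm_le : ∀ z, H m ≤ H z := by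
    intro z
    rcases le_total z m with hz | hz
    · exact anti (Set.mem_Iic.2 hz) (Set.mem_Iic.2 le_rfl) hz
    · exact mono (Set.mem_Ici.2 le_rfl) (Set.mem_Ici.2 hz) hz
  have hH_le0 : ∀ z, H z ≤ 0 := by
    intro z
    rcases le_total z m with hz | hz
    · refine ge_of_tendsto hbot ?_
      filter_upwards [eventually_le_atBot z] with w hw
      exact anti (Set.mem_Iic.2 (hw.trans hz)) (Set.mem_Iic.2 hz) hw
    · refine ge_of_tendsto htop ?_
      filter_upwards [eventually_ge_atTop z] with w hw
      exact mono (Set.mem_Ici.2 hz) (Set.mem_Ici.2 (hz.trans hw)) hw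
  rw [abs_of_nonpos (hH_le0 y), abs_of_nonpos (hH_le0 m)]
  linarith [hHm_le y]

lemma abs_H_le {ρ : ℝ} (hρ2 : ρ^2 < 1) (hρ0 : ρ ≠ 0) (x y : ℝ) :
    |stdNormalCDF x * stdNormalCDF y - Fsym ρ x y|
      ≤ |stdNormalCDF x * stdNormalCDF (ystar ρ x) - Fsym ρ x (ystar ρ x)| := by
  have hs : 0 < Real.sqrt (1 - ρ^2) := s_pos hρ2
  set s := Real.sqrt (1 - ρ^2)
  have hd : ∀ y : ℝ, HasDerivAt (fun y => stdNormalCDF x * stdNormalCDF y - Fsym ρ x y)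
      (stdNormalPDF y * (stdNormalCDF x - stdNormalCDF ((x - ρ*y)/s))) y := by
    intro y
    have h1 := ((hasDerivAt_stdNormalCDF y).const_mul (stdNormalCDF x)).sub
      (hasDerivAt_Fsym hρ2 x y)
    exact h1.congr_deriv (by ring)
  have hbot : Tendsto (fun y => stdNormalCDF x * stdNormalCDF y - Fsym ρ x y) atBot (𝓝 0) := by
    have := (tendsto_stdNormalCDF_atBot.const_mul (stdNormalCDF x)).sub (tendsto_Fsym_atBot (ρ := ρ) x)
    simpa using this
  have htop : Tendsto (fun y => stdNormalCDF x * stdNormalCDF y - Fsym ρ x y) atTop (𝓝 0) := by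
    have h2 : Tendsto (Fsym ρ x) atTop (𝓝 (stdNormalCDF x)) := by
      rw [← Fb_eq_Fsym hρ2 x]; exact tendsto_Fb_atTop hρ2 x
    have := (tendsto_stdNormalCDF_atTop.const_mul (stdNormalCDF x)).sub h2
    simpa using this
  -- key inequality on the CDF argument
  have harg : ∀ y : ℝ, ρ * y ≤ ρ * ystar ρ x → x ≤ (x - ρ*y)/s := by
    intro y hy
    rw [le_div_iff₀ hs]
    have : ρ * ystar ρ x = x * (1 - s) := by
      rw [ystar]; field_simp; rfl
    nlinarith
  have harg' : ∀ y : ℝ, ρ * ystar ρ x ≤ ρ * y → (x - ρ*y)/s ≤ x := by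
    intro y hy
    rw [div_le_iff₀ hs]
    have : ρ * ystar ρ x = x * (1 - s) := by
      rw [ystar]; field_simp; rfl
    nlinarith
  rcases lt_or_gt_of_ne hρ0 with hneg | hpos
  · -- ρ < 0 : H increases up to ystar then decreases; apply valley to -H
    rw [← abs_neg (stdNormalCDF x * stdNormalCDF y - Fsym ρ x y),
      ← abs_neg (stdNormalCDF x * stdNormalCDF (ystar ρ x) - Fsym ρ x (ystar ρ x))]
    refine abs_le_of_valley (m := ystar ρ x)
      (H := fun y => -(stdNormalCDF x * stdNormalCDF y - Fsym ρ x y))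
      (d := fun y => -(stdNormalPDF y * (stdNormalCDF x - stdNormalCDF ((x - ρ*y)/s))))
      (fun y => (hd y).neg) (by simpa using hbot.neg) (by simpa using htop.neg)
      (fun y hy => ?_) (fun y hy => ?_) y
    · rw [neg_nonpos]
      refine mul_nonneg (stdNormalPDF_nonneg y) ?_
      have : (x - ρ*y)/s ≤ x := harg' y (by nlinarith)
      linarith [monotone_stdNormalCDF this]
    · rw [neg_nonneg]
      have hyx : x ≤ (x - ρ*y)/s := harg y (by nlinarith)
      have := monotone_stdNormalCDF hyx
      nlinarith [stdNormalPDF_nonneg y]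
  · -- ρ > 0 : H decreases up to ystar then increases
    refine abs_le_of_valley (m := ystar ρ x) (d := fun y =>
        stdNormalPDF y * (stdNormalCDF x - stdNormalCDF ((x - ρ*y)/s)))
      hd hbot htop (fun y hy => ?_) (fun y hy => ?_) y
    · have hyx : x ≤ (x - ρ*y)/s := harg y (by nlinarith)
      have := monotone_stdNormalCDF hyx
      nlinarith [stdNormalPDF_nonneg y]
    · have : (x - ρ*y)/s ≤ x := harg' y (by nlinarith)
      have := monotone_stdNormalCDF this
      nlinarith [stdNormalPDF_nonneg y]

lemma integrable_cdf_mul_pdf' (ρ s y : ℝ) (ν : Measure ℝ) (hν : ν ≤ volume) :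
    Integrable (fun u => stdNormalCDF ((y - ρ*u)/s) * stdNormalPDF u) ν := by
  have heqf : (fun u => stdNormalCDF (y/s - (ρ/s)*u) * stdNormalPDF u)
      = (fun u => stdNormalCDF ((y - ρ*u)/s) * stdNormalPDF u) := by
    funext u
    rw [sub_div, div_mul_eq_mul_div]
  rw [← heqf]
  exact integrable_cdf_mul_pdf _ _ ν hν

lemma Gb_split {ρ : ℝ} (x y : ℝ) :
    ∫ u in Set.Ioi x, stdNormalCDF ((y - ρ*u)/Real.sqrt (1 - ρ^2)) * stdNormalPDF u
      = Gb ρ y - Fb ρ x y := by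
  have h := intervalIntegral.integral_Iic_add_Ioi (b := x)
    (f := fun u => stdNormalCDF ((y - ρ*u)/Real.sqrt (1 - ρ^2)) * stdNormalPDF u)
    (integrable_cdf_mul_pdf' _ _ _ volume le_rfl).integrableOn
    (integrable_cdf_mul_pdf' _ _ _ volume le_rfl).integrableOn
  rw [Gb, Fb]
  linarith

section prob
variable {Ω : Type*} [MeasurableSpace Ω] (μ : Measure Ω) [IsProbabilityMeasure μ]
    (U V : Ω → ℝ)

lemma measure_U_le (hU : Measurable U)
    (hUdist : Measure.map U μ = ProbabilityTheory.gaussianReal 0 1) (x : ℝ) : μ {ω | U ω ≤ x} = ENNReal.ofReal (stdNormalCDF x) := by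
  have : {ω | U ω ≤ x} = U ⁻¹' Set.Iic x := rfl
  rw [this, ← Measure.map_apply hU measurableSet_Iic, hUdist, gaussianReal_Iic]

lemma measure_U_gt (hU : Measurable U)
    (hUdist : Measure.map U μ = ProbabilityTheory.gaussianReal 0 1) (x : ℝ) : μ {ω | x < U ω} = ENNReal.ofReal (1 - stdNormalCDF x) := by
  have : {ω | x < U ω} = U ⁻¹' Set.Ioi x := rfl
  rw [this, ← Measure.map_apply hU measurableSet_Ioi, hUdist,
    gaussianReal_apply_eq_integral 0 one_ne_zero, ← stdNormalPDF_eq, integral_Ioi_stdNormal]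

lemma measure_joint (hU : Measurable U) (hV : Measurable V)
    (hUdist : Measure.map U μ = ProbabilityTheory.gaussianReal 0 1)
    (hVdist : Measure.map V μ = ProbabilityTheory.gaussianReal 0 1)
    (hUV : ProbabilityTheory.IndepFun U V μ)
    {ρ : ℝ} (hρ2 : ρ^2 < 1) (x y : ℝ)
    {T : Set ℝ} (hT : MeasurableSet T) :
    μ {ω | (ρ * U ω + Real.sqrt (1 - ρ^2) * V ω ≤ y) ∧ U ω ∈ T}
      = ENNReal.ofReal (∫ u in T,
          stdNormalCDF ((y - ρ*u)/Real.sqrt (1 - ρ^2)) * stdNormalPDF u) := by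
  have hs : 0 < Real.sqrt (1 - ρ^2) := Real.sqrt_pos.2 (by nlinarith)
  set s := Real.sqrt (1 - ρ^2) with hsdef
  have hprod : Measure.map (fun ω => (U ω, V ω)) μ
      = (gaussianReal 0 1).prod (gaussianReal 0 1) := by
    rw [(ProbabilityTheory.indepFun_iff_map_prod_eq_prod_map_map hU.aemeasurable
      hV.aemeasurable).mp hUV, hUdist, hVdist]
  set S : Set (ℝ × ℝ) := {p | ρ * p.1 + s * p.2 ≤ y ∧ p.1 ∈ T} with hSdef
  have hSm : MeasurableSet S := by
    refine MeasurableSet.inter ?_ (measurable_fst hT)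
    exact measurableSet_le ((measurable_fst.const_mul ρ).add (measurable_snd.const_mul s))
      measurable_const
  have hset : {ω | (ρ * U ω + s * V ω ≤ y) ∧ U ω ∈ T}
      = (fun ω => (U ω, V ω)) ⁻¹' S := rfl
  rw [hset, ← Measure.map_apply (hU.prodMk hV) hSm, hprod, Measure.prod_apply hSm]
  have hsec : ∀ u : ℝ, gaussianReal 0 1 (Prod.mk u ⁻¹' S)
      = Set.indicator T (fun u => ENNReal.ofReal
          (stdNormalCDF ((y - ρ*u)/s))) u := by
    intro u
    by_cases hu : u ∈ T
    · have : Prod.mk u ⁻¹' S = Set.Iic ((y - ρ*u)/s) := by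
        ext v
        simp only [hSdef, Set.mem_preimage, Set.mem_setOf_eq, Set.mem_Iic, hu, and_true]
        rw [le_div_iff₀ hs]
        constructor <;> intro h <;> nlinarith
      rw [this, gaussianReal_Iic, Set.indicator_of_mem hu]
    · have : Prod.mk u ⁻¹' S = ∅ := by
        ext v
        simp [hSdef, hu]
      rw [this, Set.indicator_of_notMem hu]
      simp
  rw [lintegral_congr hsec, lintegral_indicator hT _]
  have hgauss : gaussianReal 0 1 = volume.withDensity (gaussianPDF 0 1) :=
    gaussianReal_of_var_ne_zero 0 one_ne_zero
  have hgm : Measurable fun a : ℝ => ENNReal.ofReal (stdNormalCDF ((y - ρ*a)/s)) :=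
    (continuous_stdNormalCDF.comp
        (show Continuous fun a : ℝ => (y - ρ*a)/s by continuity)).measurable.ennreal_ofReal
  rw [hgauss, restrict_withDensity hT,
    lintegral_withDensity_eq_lintegral_mul _ (measurable_gaussianPDF 0 1) hgm]
  have heq : ∀ u : ℝ, gaussianPDF 0 1 u * ENNReal.ofReal (stdNormalCDF ((y - ρ*u)/s))
      = ENNReal.ofReal (stdNormalCDF ((y - ρ*u)/s) * stdNormalPDF u) := by
    intro u
    rw [gaussianPDF, ← stdNormalPDF_eq, ← ENNReal.ofReal_mul (stdNormalPDF_nonneg u),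
      mul_comm]
  simp only [Pi.mul_apply]
  rw [lintegral_congr heq]
  rw [← ofReal_integral_eq_lintegral_ofReal
    ((integrable_cdf_mul_pdf' ρ s y volume le_rfl).restrict)
    (ae_of_all _ fun u => mul_nonneg (stdNormalCDF_nonneg _) (stdNormalPDF_nonneg _))]
end prob



/-- For a bivariate standard normal pair `(X,Y)` with correlation
`ρ ∈ (−1,1)`, `ρ ≠ 0`, realized as `X = U`, `Y = ρU + √(1−ρ²)V` with `U, V` independent
standard normals, the Kolmogorov dependence statistic satisfies
`k(x) = sup_y |P(Y ≤ y | X > x) − P(Y ≤ y | X ≤ x)|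
      = (Φ(x)(1−Φ(x)))⁻¹ |∫_{−∞}^{y*} Φ((x−ρu)/√(1−ρ²)) φ(u) du − Φ(x)Φ(y*)|`,
where conditional probabilities are the ratios `P(Y ≤ y, A)/P(A)`. -/
theorem stmt8 {Ω : Type*} [MeasurableSpace Ω] (μ : Measure Ω) [IsProbabilityMeasure μ]
    (U V : Ω → ℝ) (hU : Measurable U) (hV : Measurable V)
    (hUdist : Measure.map U μ = ProbabilityTheory.gaussianReal 0 1)
    (hVdist : Measure.map V μ = ProbabilityTheory.gaussianReal 0 1)
    (hUV : ProbabilityTheory.IndepFun U V μ)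
    (ρ : ℝ) (hρ : ρ ∈ Set.Ioo (-1 : ℝ) 1) (hρ0 : ρ ≠ 0) (x : ℝ)
    (Y : Ω → ℝ) (hY : Y = fun ω => ρ * U ω + Real.sqrt (1 - ρ ^ 2) * V ω) :
    (⨆ y : ℝ,
        |(μ {ω | Y ω ≤ y ∧ x < U ω}).toReal / (μ {ω | x < U ω}).toReal
          - (μ {ω | Y ω ≤ y ∧ U ω ≤ x}).toReal / (μ {ω | U ω ≤ x}).toReal|)
      = (stdNormalCDF x * (1 - stdNormalCDF x))⁻¹ *
          |(∫ u in Set.Iic (ystar ρ x),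
              stdNormalCDF ((x - ρ * u) / Real.sqrt (1 - ρ ^ 2)) * stdNormalPDF u)
            - stdNormalCDF x * stdNormalCDF (ystar ρ x)| := by
  obtain ⟨hρl, hρr⟩ := hρ
  have hρ2 : ρ ^ 2 < 1 := by nlinarith
  have hs : 0 < Real.sqrt (1 - ρ ^ 2) := s_pos hρ2
  have hΦpos := stdNormalCDF_pos x
  have hΦlt := stdNormalCDF_lt_one x
  have hcpos : 0 < stdNormalCDF x * (1 - stdNormalCDF x) := by nlinarith
  have hgt : ∀ y : ℝ, μ {ω | Y ω ≤ y ∧ x < U ω} = ENNReal.ofReal (Gb ρ y - Fb ρ x y) := by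
    intro y
    have h := measure_joint μ U V hU hV hUdist hVdist hUV (T := Set.Ioi x) hρ2 x y measurableSet_Ioi
    rw [← Gb_split x y]
    rw [hY]
    exact h
  have hle : ∀ y : ℝ, μ {ω | Y ω ≤ y ∧ U ω ≤ x} = ENNReal.ofReal (Fb ρ x y) := by
    intro y
    have h := measure_joint μ U V hU hV hUdist hVdist hUV (T := Set.Iic x) hρ2 x y measurableSet_Iic
    rw [hY]
    exact h
  have hFb_nonneg : ∀ y : ℝ, 0 ≤ Fb ρ x y := fun y =>
    integral_nonneg fun u => mul_nonneg (stdNormalCDF_nonneg _) (stdNormalPDF_nonneg _)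
  have hGbFb_nonneg : ∀ y : ℝ, 0 ≤ Gb ρ y - Fb ρ x y := by
    intro y
    rw [← Gb_split x y]
    exact integral_nonneg fun u => mul_nonneg (stdNormalCDF_nonneg _) (stdNormalPDF_nonneg _)
  have hterm : ∀ y : ℝ,
      |(μ {ω | Y ω ≤ y ∧ x < U ω}).toReal / (μ {ω | x < U ω}).toReal
        - (μ {ω | Y ω ≤ y ∧ U ω ≤ x}).toReal / (μ {ω | U ω ≤ x}).toReal|
      = |stdNormalCDF x * stdNormalCDF y - Fsym ρ x y|
          / (stdNormalCDF x * (1 - stdNormalCDF x)) := by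
    intro y
    rw [hgt y, hle y, measure_U_le μ U hU hUdist x, measure_U_gt μ U hU hUdist x,
      ENNReal.toReal_ofReal (hGbFb_nonneg y), ENNReal.toReal_ofReal (hFb_nonneg y),
      ENNReal.toReal_ofReal (by linarith : (0:ℝ) ≤ 1 - stdNormalCDF x),
      ENNReal.toReal_ofReal (by linarith : (0:ℝ) ≤ stdNormalCDF x)]
    have hGb : Gb ρ y = stdNormalCDF y := congrFun (Gb_eq_cdf hρ2) y
    have hFbs : Fb ρ x y = Fsym ρ x y := congrFun (Fb_eq_Fsym hρ2 x) y
    rw [hGb, hFbs]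
    rw [show (stdNormalCDF y - Fsym ρ x y) / (1 - stdNormalCDF x)
          - Fsym ρ x y / stdNormalCDF x
        = (stdNormalCDF x * stdNormalCDF y - Fsym ρ x y)
            / (stdNormalCDF x * (1 - stdNormalCDF x)) by
      have h1 : stdNormalCDF x ≠ 0 := hΦpos.ne'
      have h2 : (1:ℝ) - stdNormalCDF x ≠ 0 := ne_of_gt (by linarith)
      field_simp
      ring]
    rw [abs_div, abs_of_pos hcpos]
  simp only [hterm]
  have hsup : (⨆ y : ℝ, |stdNormalCDF x * stdNormalCDF y - Fsym ρ x y|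
        / (stdNormalCDF x * (1 - stdNormalCDF x)))
      = |stdNormalCDF x * stdNormalCDF (ystar ρ x) - Fsym ρ x (ystar ρ x)|
        / (stdNormalCDF x * (1 - stdNormalCDF x)) := by
    refine le_antisymm (ciSup_le fun y => ?_) ?_
    · exact (div_le_div_iff_of_pos_right hcpos).mpr (abs_H_le hρ2 hρ0 x y)
    · refine le_ciSup (f := fun y => |stdNormalCDF x * stdNormalCDF y - Fsym ρ x y|
          / (stdNormalCDF x * (1 - stdNormalCDF x)))
        ⟨|stdNormalCDF x * stdNormalCDF (ystar ρ x) - Fsym ρ x (ystar ρ x)|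
          / (stdNormalCDF x * (1 - stdNormalCDF x)), ?_⟩ (ystar ρ x)
      rintro v ⟨y, rfl⟩
      exact (div_le_div_iff_of_pos_right hcpos).mpr (abs_H_le hρ2 hρ0 x y)
  rw [hsup, abs_sub_comm, div_eq_inv_mul]
  rfl
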